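/- Let a ∈ (ℂˣ)^m, S ⊆ {1,…,m}, and set s := h₁+⋯+h_m ∈ ℂ[h]. For F ∈ ℂ[T] define M_F := {(F(s+m−1)·p, F(s)·q) : p, q ∈ ℂ[h]} ⊆ ℂ[h]², where F(p) denotes evaluation of F at p ∈ ℂ[h]. Then: (i) for every F ∈ ℂ[T] and every v ∈ M_F and i ∈ {1,…,m}, one has E_i^{(a,S)}·Δ_i⁻¹(v) ∈ M_F and F_i^{(a,S)}·Δ_i(v) ∈ M_F (where Δ_i⁻¹ and Δ_i are applied entrywise to the column vector v); (ii) if F ∈ ℂ[T] is nonzero and G ∈ ℂ[T] is nonconstant, then M_{F·G} is strictly contained in M_F. Consequently, ℂ[h]² admits an infinite strictly decreasing chain of ℂ[h]-submodules each closed under all the maps v ↦ E_i^{(a,S)}·Δ_i⁻¹(v) and v ↦ F_i^{(a,S)}·Δ_i(v). -/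

import Mathlib

open MvPolynomial

/-- The shift automorphism of `ℂ[h₁,…]` sending `h_i ↦ h_i + c i`. -/
noncomputable def shiftAut {ι : Type*} (c : ι → ℂ) :
    MvPolynomial ι ℂ ≃ₐ[ℂ] MvPolynomial ι ℂ :=
  AlgEquiv.ofAlgHom
    (aeval fun i => X i + C (c i))
    (aeval fun i => X i - C (c i))
    (by ext i : 1; simp)
    (by ext i : 1; simp)

/-- The automorphism `σ_i` of `ℂ[h₁,…,h_m]` with `σ_i(h_i) = h_i - 1`, `σ_i(h_j) = h_j` (j ≠ i). -/
noncomputable def sig (m : ℕ) (i : Fin m) :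
    MvPolynomial (Fin m) ℂ ≃ₐ[ℂ] MvPolynomial (Fin m) ℂ :=
  shiftAut (fun j => if j = i then (-1 : ℂ) else 0)

/-- The automorphism `Δ = σ₁∘⋯∘σ_m`, i.e. `Δ(h_i) = h_i - 1` for all `i`. -/
noncomputable def Del (m : ℕ) :
    MvPolynomial (Fin m) ℂ ≃ₐ[ℂ] MvPolynomial (Fin m) ℂ :=
  shiftAut (fun _ : Fin m => (-1 : ℂ))

/-- The automorphism `Δ_i = σ_i⁻¹ ∘ Δ`. -/
noncomputable def Deli (m : ℕ) (i : Fin m) :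
    MvPolynomial (Fin m) ℂ ≃ₐ[ℂ] MvPolynomial (Fin m) ℂ :=
  (Del m).trans (sig m i).symm

/-- Normal-form matrix `E_i^{(a,S)}`. -/
noncomputable def Emat (m : ℕ) (a : Fin m → ℂˣ) (S : Finset (Fin m)) (i : Fin m) :
    Matrix (Fin 2) (Fin 2) (MvPolynomial (Fin m) ℂ) :=
  if i ∈ S then !![0, C ((a i : ℂ)) * X i; 0, 0] else !![0, C ((a i : ℂ)); 0, 0]

/-- Normal-form matrix `F_i^{(a,S)}`. -/
noncomputable def Fmat (m : ℕ) (a : Fin m → ℂˣ) (S : Finset (Fin m)) (i : Fin m) :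
    Matrix (Fin 2) (Fin 2) (MvPolynomial (Fin m) ℂ) :=
  if i ∈ S then !![0, 0; C (((a i)⁻¹ : ℂˣ) : ℂ), 0]
  else !![0, 0; C (((a i)⁻¹ : ℂˣ) : ℂ) * X i, 0]

/-- The subset `M_F = {(F(s+m−1)·p, F(s)·q) : p, q ∈ ℂ[h]}` of `ℂ[h]²`, where `s = h₁+⋯+h_m`. -/
noncomputable def Mset (m : ℕ) (F : Polynomial ℂ) : Set (Fin 2 → MvPolynomial (Fin m) ℂ) :=
  {v | ∃ p q : MvPolynomial (Fin m) ℂ,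
    v = ![Polynomial.aeval ((∑ i, X i) + C ((m : ℂ) - 1)) F * p,
          Polynomial.aeval (∑ i, (X i : MvPolynomial (Fin m) ℂ)) F * q]}

lemma shiftAut_apply {ι : Type*} (c : ι → ℂ) (p) :
    shiftAut c p = aeval (fun i => X i + C (c i)) p := rfl

lemma shiftAut_symm_apply {ι : Type*} (c : ι → ℂ) (p) :
    (shiftAut c).symm p = aeval (fun i => X i - C (c i)) p := rfl

lemma deli_symm_X (m : ℕ) (i j : Fin m) :
    (Deli m i).symm (X j) = X j + C (if j = i then 0 else 1) := by
  simp only [Deli, AlgEquiv.symm_trans_apply, AlgEquiv.symm_symm, sig, Del,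
    shiftAut_apply, shiftAut_symm_apply, aeval_X]
  rw [map_add, aeval_X, aeval_C]
  simp only [algebraMap_eq]
  split <;> simp [← C_add, ← C_sub] <;> ring_nf

lemma sum_ite_compl (m : ℕ) (i : Fin m) :
    ∑ j : Fin m, (if j = i then (0:ℂ) else 1) = (m:ℂ) - 1 := by
  have h : ∀ j : Fin m, (if j = i then (0:ℂ) else 1) = 1 - (if j = i then 1 else 0) := by
    intro j; split <;> ring
  simp_rw [h, Finset.sum_sub_distrib, Finset.sum_ite_eq' Finset.univ i (fun _ => (1:ℂ))]
  simp

lemma deli_symm_s (m : ℕ) (i : Fin m) :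
    (Deli m i).symm (∑ j, (X j : MvPolynomial (Fin m) ℂ)) = (∑ j, X j) + C ((m:ℂ) - 1) := by
  rw [map_sum]
  simp_rw [deli_symm_X]
  rw [Finset.sum_add_distrib, ← map_sum C, sum_ite_compl]

lemma deli_C (m : ℕ) (i : Fin m) (c : ℂ) : Deli m i (C c) = C c := by
  rw [← algebraMap_eq]; exact (Deli m i).commutes _

lemma deli_s (m : ℕ) (i : Fin m) :
    Deli m i (∑ j, (X j : MvPolynomial (Fin m) ℂ)) = (∑ j, X j) - C ((m:ℂ) - 1) := by
  have := congrArg (Deli m i) (deli_symm_s m i)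
  rw [AlgEquiv.apply_symm_apply, map_add, deli_C] at this
  linear_combination (norm := ring_nf) -this

lemma deli_A (m : ℕ) (i : Fin m) (F : Polynomial ℂ) :
    Deli m i (Polynomial.aeval ((∑ j, X j) + C ((m : ℂ) - 1)) F)
      = Polynomial.aeval (∑ j, (X j : MvPolynomial (Fin m) ℂ)) F := by
  rw [← Polynomial.aeval_algHom_apply]
  congr 1
  rw [map_add, deli_s, deli_C]; ring

lemma deli_symm_B (m : ℕ) (i : Fin m) (F : Polynomial ℂ) :
    (Deli m i).symm (Polynomial.aeval (∑ j, (X j : MvPolynomial (Fin m) ℂ)) F)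
      = Polynomial.aeval ((∑ j, X j) + C ((m : ℂ) - 1)) F := by
  rw [← Polynomial.aeval_algHom_apply, deli_symm_s]

lemma mulVec_E {R : Type*} [CommSemiring R] (e : R) (w : Fin 2 → R) :
    (!![0, e; 0, 0]).mulVec w = ![e * w 1, 0] := by
  funext j; fin_cases j <;>
    simp [Matrix.mulVec, dotProduct, Fin.sum_univ_two]

lemma mulVec_F {R : Type*} [CommSemiring R] (f : R) (w : Fin 2 → R) :
    (!![0, 0; f, 0]).mulVec w = ![0, f * w 0] := by
  funext j; fin_cases j <;>
    simp [Matrix.mulVec, dotProduct, Fin.sum_univ_two]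

lemma phi_t (m : ℕ) :
    (aeval (fun _ : Fin m => Polynomial.X) : MvPolynomial (Fin m) ℂ →ₐ[ℂ] Polynomial ℂ)
      ((∑ j, X j) + C ((m:ℂ) - 1))
      = Polynomial.C (m:ℂ) * Polynomial.X + Polynomial.C ((m:ℂ) - 1) := by
  rw [map_add, map_sum]
  simp only [aeval_X, Finset.sum_const, Finset.card_univ, Fintype.card_fin, nsmul_eq_mul,
    aeval_C, Algebra.algebraMap_self, RingHom.id_apply]
  rw [Polynomial.algebraMap_eq]
  push_cast [Polynomial.C_eq_natCast]
  ring

lemma natDegree_q (m : ℕ) (hm : (m:ℂ) ≠ 0) :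
    (Polynomial.C (m:ℂ) * Polynomial.X + Polynomial.C ((m:ℂ) - 1)).natDegree = 1 :=
  Polynomial.natDegree_linear hm

lemma aeval_t_ne_zero (m : ℕ) (hm : (m:ℂ) ≠ 0) {F : Polynomial ℂ} (hF : F ≠ 0) :
    Polynomial.aeval ((∑ j, X j) + C ((m : ℂ) - 1)) F ≠ (0 : MvPolynomial (Fin m) ℂ) := by
  intro h
  have h2 := congrArg (aeval (fun _ : Fin m => Polynomial.X) :
    MvPolynomial (Fin m) ℂ →ₐ[ℂ] Polynomial ℂ) h
  rw [map_zero, ← Polynomial.aeval_algHom_apply, phi_t, ← Polynomial.comp_eq_aeval] at h2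
  rcases Polynomial.comp_eq_zero_iff.mp h2 with h3 | ⟨_, h4⟩
  · exact hF h3
  · have h5 := natDegree_q m hm
    rw [h4, Polynomial.natDegree_C] at h5
    exact one_ne_zero h5.symm

lemma aeval_t_not_unit (m : ℕ) (hm : (m:ℂ) ≠ 0) {G : Polynomial ℂ} (hG : 0 < G.natDegree) :
    ¬ IsUnit (Polynomial.aeval ((∑ j, X j) + C ((m : ℂ) - 1)) G : MvPolynomial (Fin m) ℂ) := by
  intro h
  have h2 := h.map (aeval (fun _ : Fin m => Polynomial.X) :
    MvPolynomial (Fin m) ℂ →ₐ[ℂ] Polynomial ℂ)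
  rw [← Polynomial.aeval_algHom_apply, phi_t, ← Polynomial.comp_eq_aeval] at h2
  have h3 := Polynomial.natDegree_eq_zero_of_isUnit h2
  rw [Polynomial.natDegree_comp, natDegree_q m hm, mul_one] at h3
  omega

/-- `Mset m F` as a submodule. -/
noncomputable def MsetSub (m : ℕ) (F : Polynomial ℂ) :
    Submodule (MvPolynomial (Fin m) ℂ) (Fin 2 → MvPolynomial (Fin m) ℂ) where
  carrier := Mset m F
  zero_mem' := ⟨0, 0, by funext j; fin_cases j <;> simp⟩
  add_mem' := by
    rintro x y ⟨p, q, rfl⟩ ⟨p', q', rfl⟩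
    exact ⟨p + p', q + q', by funext j; fin_cases j <;> simp <;> ring⟩
  smul_mem' := by
    rintro r x ⟨p, q, rfl⟩
    exact ⟨r * p, r * q, by
      funext j; fin_cases j <;> simp [Pi.smul_apply, smul_eq_mul] <;> ring⟩

theorem stmt_15 (m : ℕ) (hm : 2 ≤ m) (a : Fin m → ℂˣ) (S : Finset (Fin m)) :
    (∀ F : Polynomial ℂ, ∀ v ∈ Mset m F, ∀ i,
      (Emat m a S i).mulVec (⇑(Deli m i).symm ∘ v) ∈ Mset m F ∧
      (Fmat m a S i).mulVec (⇑(Deli m i) ∘ v) ∈ Mset m F) ∧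
    (∀ F G : Polynomial ℂ, F ≠ 0 → 0 < G.natDegree → Mset m (F * G) ⊂ Mset m F) ∧
    (∃ N : ℕ → Submodule (MvPolynomial (Fin m) ℂ) (Fin 2 → MvPolynomial (Fin m) ℂ),
      (∀ k, N (k + 1) < N k) ∧
      (∀ k i, ∀ v ∈ N k,
        (Emat m a S i).mulVec (⇑(Deli m i).symm ∘ v) ∈ N k ∧
        (Fmat m a S i).mulVec (⇑(Deli m i) ∘ v) ∈ N k)) := by
  have hm0 : (m : ℂ) ≠ 0 := Nat.cast_ne_zero.mpr (by omega)
  have part1 : ∀ F : Polynomial ℂ, ∀ v ∈ Mset m F, ∀ i,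
      (Emat m a S i).mulVec (⇑(Deli m i).symm ∘ v) ∈ Mset m F ∧
      (Fmat m a S i).mulVec (⇑(Deli m i) ∘ v) ∈ Mset m F := by
    rintro F v ⟨p, q, rfl⟩ i
    constructor
    · by_cases hS : i ∈ S
      · rw [Emat, if_pos hS, mulVec_E]
        refine ⟨C ((a i : ℂ)) * X i * (Deli m i).symm q, 0, ?_⟩
        funext j; fin_cases j
        · simp only [Matrix.cons_val_zero, Function.comp_apply, Matrix.cons_val_one,
            Matrix.head_cons, map_mul, deli_symm_B]
          ring
        · simp
      · rw [Emat, if_neg hS, mulVec_E]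
        refine ⟨C ((a i : ℂ)) * (Deli m i).symm q, 0, ?_⟩
        funext j; fin_cases j
        · simp only [Matrix.cons_val_zero, Function.comp_apply, Matrix.cons_val_one,
            Matrix.head_cons, map_mul, deli_symm_B]
          ring
        · simp
    · by_cases hS : i ∈ S
      · rw [Fmat, if_pos hS, mulVec_F]
        refine ⟨0, C (((a i)⁻¹ : ℂˣ) : ℂ) * Deli m i p, ?_⟩
        funext j; fin_cases j
        · simp
        · simp only [Matrix.cons_val_one, Matrix.head_cons, Function.comp_apply,
            Matrix.cons_val_zero, map_mul, deli_A]
          ring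
      · rw [Fmat, if_neg hS, mulVec_F]
        refine ⟨0, C (((a i)⁻¹ : ℂˣ) : ℂ) * X i * Deli m i p, ?_⟩
        funext j; fin_cases j
        · simp
        · simp only [Matrix.cons_val_one, Matrix.head_cons, Function.comp_apply,
            Matrix.cons_val_zero, map_mul, deli_A]
          ring
  have part2 : ∀ F G : Polynomial ℂ, F ≠ 0 → 0 < G.natDegree →
      Mset m (F * G) ⊂ Mset m F := by
    intro F G hF hG
    rw [Set.ssubset_def]
    constructor
    · rintro v ⟨p, q, rfl⟩
      exact ⟨Polynomial.aeval ((∑ j, X j) + C ((m : ℂ) - 1)) G * p,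
        Polynomial.aeval (∑ j, (X j : MvPolynomial (Fin m) ℂ)) G * q, by
          funext j; fin_cases j <;> simp [map_mul] <;> ring⟩
    · intro hle
      have hwF : (![Polynomial.aeval ((∑ j, X j) + C ((m : ℂ) - 1)) F, 0] :
          Fin 2 → MvPolynomial (Fin m) ℂ) ∈ Mset m F :=
        ⟨1, 0, by funext j; fin_cases j <;> simp⟩
      obtain ⟨p, q, heq⟩ := hle hwF
      have h0 := congrFun heq 0
      simp only [Matrix.cons_val_zero, map_mul] at h0
      have h1 : Polynomial.aeval ((∑ j, X j) + C ((m : ℂ) - 1)) F * 1 =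
          Polynomial.aeval ((∑ j, X j) + C ((m : ℂ) - 1)) F *
            (Polynomial.aeval ((∑ j, X j) + C ((m : ℂ) - 1)) G * p) := by
        rw [mul_one, ← mul_assoc]; exact h0
      have h2 := mul_left_cancel₀ (aeval_t_ne_zero m hm0 hF) h1
      exact aeval_t_not_unit m hm0 hG
        (IsUnit.of_mul_eq_one p h2.symm)
  refine ⟨part1, part2, fun k => MsetSub m (Polynomial.X ^ k), ?_, ?_⟩
  · intro k
    rw [← SetLike.coe_ssubset_coe]
    have h := part2 (Polynomial.X ^ k) Polynomial.X
      (pow_ne_zero k Polynomial.X_ne_zero) (by simp)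
    have hx : (Polynomial.X : Polynomial ℂ) ^ (k + 1) = Polynomial.X ^ k * Polynomial.X :=
      pow_succ _ _
    show Mset m (Polynomial.X ^ (k + 1)) ⊂ Mset m (Polynomial.X ^ k)
    rw [hx]; exact h
  · intro k i v hv
    exact part1 _ v hv i
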